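/- For every connected graph G, b(G) = min{ b(T) : T is a spanning tree of G }. -/

import Mathlib

open SimpleGraph

/-- `x` is a burning sequence for `G`: every vertex is within distance `k - i`
of the source `x i` burned in round `i` (0-indexed: `k - 1 - i`). -/
def IsBurningSeq {V : Type*} (G : SimpleGraph V) {k : ℕ} (x : Fin k → V) : Prop :=
  ∀ v : V, ∃ i : Fin k, G.dist v (x i) ≤ k - 1 - (i : ℕ)

/-- The burning number of `G`. -/
noncomputable def burnNum {V : Type*} (G : SimpleGraph V) : ℕ :=
  sInf {k : ℕ | ∃ x : Fin k → V, IsBurningSeq G x}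



section Aux
variable {V : Type*}

/-- Adding an edge between two vertices not reachable from each other keeps acyclicity. -/
lemma addEdge_isAcyclic {H : SimpleGraph V} (hH : H.IsAcyclic) {u v : V}
    (hne : u ≠ v) (hr : ¬ H.Reachable u v) :
    (H ⊔ fromEdgeSet {s(u, v)}).IsAcyclic := by
  intro w c hc
  by_cases he : s(u, v) ∈ c.edges
  · have hadj : (H ⊔ fromEdgeSet {s(u, v)}).Adj u v := by
      right
      exact (fromEdgeSet_adj _).mpr ⟨rfl, hne⟩
    have hnb : ¬ (H ⊔ fromEdgeSet {s(u, v)}).IsBridge s(u, v) := by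
      rw [isBridge_iff_adj_and_forall_cycle_notMem hadj]
      push_neg
      exact ⟨w, c, hc, he⟩
    rw [isBridge_iff] at hnb
    push_neg at hnb
    have hreach := hnb
    refine hr (hreach.mono ?_)
    calc (H ⊔ fromEdgeSet {s(u, v)}) \ fromEdgeSet {s(u, v)}
        = H \ fromEdgeSet {s(u, v)} := sup_sdiff_right_self
      _ ≤ H := sdiff_le
  · have hsub : ∀ e ∈ c.edges, e ∈ H.edgeSet := by
      intro e hec
      have := c.edges_subset_edgeSet hec
      rw [edgeSet_sup, edgeSet_fromEdgeSet] at this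
      rcases this with h1 | h2
      · exact h1
      · exfalso
        rcases h2 with ⟨h2, -⟩
        simp only [Set.mem_singleton_iff] at h2
        exact he (h2 ▸ hec)
    exact hH (c.transfer H hsub) (hc.transfer hsub)

/-- Any acyclic subgraph of a connected graph extends to a spanning tree. -/
lemma exists_tree_between [Fintype V] {F G : SimpleGraph V} (hFG : F ≤ G)
    (hF : F.IsAcyclic) (hG : G.Connected) :
    ∃ T : SimpleGraph V, F ≤ T ∧ T ≤ G ∧ T.IsTree := by
  classical
  let S : Set (SimpleGraph V) := {H | F ≤ H ∧ H ≤ G ∧ H.IsAcyclic}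
  obtain ⟨T, hTS, hmax⟩ := Set.Finite.exists_maximalFor id S (Set.toFinite S)
    ⟨F, le_refl F, hFG, hF⟩
  obtain ⟨hFT, hTG, hTa⟩ := hTS
  refine ⟨T, hFT, hTG, ?_, hTa⟩
  rw [connected_iff]
  refine ⟨?_, hG.nonempty⟩
  · -- preconnected
    intro a b
    by_contra hab
    obtain ⟨p⟩ := hG a b
    -- find a G-edge between two T-unreachable vertices
    have key : ∀ {a b : V} (_ : G.Walk a b), ¬ T.Reachable a b →
        ∃ c d : V, G.Adj c d ∧ ¬ T.Reachable c d := by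
      intro a b p
      induction p with
      | nil => intro h; exact absurd (Reachable.refl _) h
      | cons h q ih =>
        rename_i x y z
        intro hr
        by_cases hxy : T.Reachable x y
        · exact ih (fun hyz => hr (hxy.trans hyz))
        · exact ⟨x, y, h, hxy⟩
    obtain ⟨c, d, hcd, hcdr⟩ := key p hab
    set T' : SimpleGraph V := T ⊔ fromEdgeSet {s(c, d)} with hT'
    have hT'S : T' ∈ S := by
      refine ⟨le_trans hFT le_sup_left, sup_le hTG ?_, addEdge_isAcyclic hTa hcd.ne hcdr⟩
      intro e f hef
      rw [fromEdgeSet_adj] at hef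
      obtain ⟨hef, hne⟩ := hef
      simp only [Set.mem_singleton_iff, Sym2.eq_iff] at hef
      rcases hef with ⟨rfl, rfl⟩ | ⟨rfl, rfl⟩
      · exact hcd
      · exact hcd.symm
    have hEq : T = T' := le_antisymm le_sup_left (hmax hT'S le_sup_left)
    have : T.Adj c d := by
      rw [hEq]
      right
      exact (fromEdgeSet_adj _).mpr ⟨rfl, hcd.ne⟩
    exact hcdr this.reachable

/-- A graph whose every edge joins a vertex with its unique "parent" of strictly
smaller potential is acyclic. -/
lemma isAcyclic_of_parent {F : SimpleGraph V} {B : V → ℕ} {par : V → V}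
    (h : ∀ a b : V, F.Adj a b → (par a = b ∧ B b < B a) ∨ (par b = a ∧ B a < B b)) :
    F.IsAcyclic := by
  classical
  suffices key : ∀ (a : V) (c : F.Walk a a), c.IsCycle → (∀ y ∈ c.support, B y ≤ B a) → False by
    intro w c hc
    have hne : c.support.toFinset.Nonempty := by
      simp [List.toFinset_nonempty_iff, c.support_ne_nil]
    obtain ⟨a, haf, hamax⟩ := Finset.exists_max_image c.support.toFinset B hne
    rw [List.mem_toFinset] at haf
    have hc' := hc.rotate haf
    refine key a (c.rotate a haf) hc' ?_
    intro y hy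
    rcases (Walk.support_eq_cons (c.rotate a haf)) ▸ hy with hy'
    rw [List.mem_cons] at hy'
    rcases hy' with rfl | hy'
    · exact le_refl _
    · have : y ∈ c.support.tail := (Walk.support_rotate c a haf).mem_iff.mp hy'
      exact hamax y (List.mem_toFinset.mpr (List.mem_of_mem_tail this))
  intro a c hc hmax
  cases c with
  | nil => simpa using hc.three_le_length
  | @cons _ b _ h1 q =>
    have hlen : 2 ≤ q.length := by
      have := hc.three_le_length
      simpa using this
    rw [Walk.cons_isCycle_iff] at hc
    obtain ⟨hqp, -⟩ := hc
    have hqr : q.reverse.IsPath := hqp.reverse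
    cases hq2 : q.reverse with
    | nil => exact F.irrefl h1
    | @cons _ cv _ h2 r =>
      have hcsup : cv ∈ q.support := by
        have : cv ∈ q.reverse.support := by rw [hq2]; simp
        rw [Walk.support_reverse, List.mem_reverse] at this
        exact this
      have hbne : cv ≠ b := by
        rintro rfl
        rw [hq2, Walk.cons_isPath_iff] at hqr
        have hrnil : r = Walk.nil := (Walk.isPath_iff_eq_nil (p := r)).mp hqr.1
        have : q.reverse.length = 1 := by rw [hq2, hrnil]; simp
        rw [Walk.length_reverse] at this
        omega
      -- both b and cv are F-neighbors of a with B ≤ B a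
      have hBb : B b ≤ B a := hmax b (by simp)
      have hBc : B cv ≤ B a := hmax cv (by simp [hcsup])
      have hadj2 : F.Adj a cv := h2
      have e1 : par a = b := by
        rcases h a b h1 with ⟨h', -⟩ | ⟨-, h'⟩
        · exact h'
        · omega
      have e2 : par a = cv := by
        rcases h a cv hadj2 with ⟨h', -⟩ | ⟨-, h'⟩
        · exact h'
        · omega
      exact hbne (e2 ▸ e1)

end Aux

/-- The burning number of a connected graph is the minimum burning number over its
spanning trees. -/
theorem burnNum_eq_min_spanning_tree {V : Type*} [Fintype V] (G : SimpleGraph V)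
    (hG : G.Connected) :
    burnNum G = sInf {m : ℕ | ∃ H : SimpleGraph V, H ≤ G ∧ H.IsTree ∧ burnNum H = m} := by
  classical
  have hVne : Nonempty V := hG.nonempty
  -- the defining set of `burnNum` is nonempty for any connected graph
  have key : ∀ H : SimpleGraph V, H.Connected →
      {k : ℕ | ∃ x : Fin k → V, IsBurningSeq H x}.Nonempty := by
    intro H hH
    have hcard : 0 < Fintype.card V := Fintype.card_pos_iff.mpr hVne
    obtain ⟨v0⟩ := hVne
    refine ⟨Fintype.card V, fun _ => v0, fun v => ?_⟩
    refine ⟨⟨0, hcard⟩, ?_⟩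
    obtain ⟨p⟩ := hH v v0
    have h1 : H.dist v v0 ≤ p.bypass.length := dist_le p.bypass
    have h2 : p.bypass.length < Fintype.card V := p.bypass_isPath.length_lt
    show H.dist v v0 ≤ Fintype.card V - 1 - ((⟨0, hcard⟩ : Fin (Fintype.card V)) : ℕ)
    have h0 : ((⟨0, hcard⟩ : Fin (Fintype.card V)) : ℕ) = 0 := rfl
    rw [h0]
    omega
  have hmono : ∀ H : SimpleGraph V, H ≤ G → H.Connected → burnNum G ≤ burnNum H := by
    intro H hHG hH
    obtain ⟨y, hy⟩ : ∃ y : Fin (burnNum H) → V, IsBurningSeq H y := Nat.sInf_mem (key H hH)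
    refine Nat.sInf_le ⟨y, fun v => ?_⟩
    obtain ⟨i, hi⟩ := hy v
    refine ⟨i, le_trans ?_ hi⟩
    obtain ⟨p, hp⟩ := hH.exists_walk_length_eq_dist v (y i)
    calc G.dist v (y i) ≤ (p.mapLe hHG).length := dist_le _
      _ = p.length := by simp [Walk.mapLe]
      _ = H.dist v (y i) := hp
  -- main construction: a spanning tree with burning number at most `burnNum G`
  set k := burnNum G with hk
  obtain ⟨x, hx⟩ : ∃ x : Fin k → V, IsBurningSeq G x := Nat.sInf_mem (key G hG)
  have hk1 : 1 ≤ k := by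
    rcases Nat.eq_zero_or_pos k with h0 | h1
    · exfalso
      obtain ⟨v0⟩ := hVne
      obtain ⟨i, -⟩ := hx v0
      exact absurd i.isLt (by omega)
    · exact h1
  haveI : Nonempty (Fin k) := ⟨⟨0, hk1⟩⟩
  -- the "burning time" potential
  set B : V → ℕ := fun v => Finset.univ.inf' Finset.univ_nonempty
      (fun i : Fin k => (i : ℕ) + G.dist v (x i)) with hB
  have hBdef : ∀ v, B v = Finset.univ.inf' Finset.univ_nonempty
      (fun i : Fin k => (i : ℕ) + G.dist v (x i)) := fun _ => rfl
  have hBle : ∀ v, B v ≤ k - 1 := by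
    intro v
    obtain ⟨i, hi⟩ := hx v
    rw [hBdef]
    refine le_trans (Finset.inf'_le _ (Finset.mem_univ i)) ?_
    have := i.isLt
    omega
  set Root : V → Prop := fun v => ∃ i : Fin k, x i = v ∧ B v = i with hRoot
  have hpar : ∀ v, ¬ Root v → ∃ u, G.Adj v u ∧ B u < B v := by
    intro v hv
    obtain ⟨i, -, hi⟩ := Finset.exists_mem_eq_inf' Finset.univ_nonempty
        (fun i : Fin k => (i : ℕ) + G.dist v (x i))
    rw [← hBdef] at hi
    by_cases hd : G.dist v (x i) = 0
    · exact absurd ⟨i, (hG.dist_eq_zero_iff.mp hd).symm, by omega⟩ hv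
    · obtain ⟨p, hp⟩ := exists_walk_of_dist_ne_zero hd
      cases p with
      | nil => exact absurd SimpleGraph.dist_self hd
      | @cons _ u _ hadj q =>
        refine ⟨u, hadj, ?_⟩
        have h1 : G.dist u (x i) ≤ q.length := dist_le q
        have h2 : B u ≤ (i : ℕ) + G.dist u (x i) := by
          rw [hBdef]
          exact Finset.inf'_le _ (Finset.mem_univ i)
        have h3 : q.length + 1 = G.dist v (x i) := by simpa using hp
        omega
  set par : V → V := fun v => if h : Root v then v else (hpar v h).choose with hpardef
  have hparspec : ∀ v, ¬ Root v → G.Adj v (par v) ∧ B (par v) < B v := by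
    intro v hv
    have : par v = (hpar v hv).choose := by rw [hpardef]; simp [hv]
    rw [this]
    exact (hpar v hv).choose_spec
  set F : SimpleGraph V := SimpleGraph.fromRel (fun a b => ¬ Root a ∧ par a = b) with hF
  have hFadj : ∀ a b, F.Adj a b ↔ a ≠ b ∧ ((¬Root a ∧ par a = b) ∨ (¬Root b ∧ par b = a)) :=
    fun a b => fromRel_adj _ a b
  have hFG : F ≤ G := by
    intro a b hab
    rw [hFadj] at hab
    obtain ⟨hne, h | h⟩ := hab
    · exact h.2 ▸ (hparspec a h.1).1
    · exact (h.2 ▸ (hparspec b h.1).1).symm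
  have hFa : F.IsAcyclic := by
    refine isAcyclic_of_parent (B := B) (par := par) ?_
    intro a b hab
    rw [hFadj] at hab
    obtain ⟨hne, h | h⟩ := hab
    · exact Or.inl ⟨h.2, h.2 ▸ (hparspec a h.1).2⟩
    · exact Or.inr ⟨h.2, h.2 ▸ (hparspec b h.1).2⟩
  -- every vertex has a short walk in the forest `F` to some source
  have chain : ∀ n v, B v ≤ n →
      ∃ (i : Fin k) (w : F.Walk v (x i)), w.length + (i : ℕ) ≤ B v := by
    intro n
    induction n with
    | zero =>
      intro v hv
      by_cases hr : Root v
      · obtain ⟨i, hxi, hBi⟩ := hr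
        subst hxi
        exact ⟨i, Walk.nil, by rw [Walk.length_nil]; omega⟩
      · exact absurd (hparspec v hr).2 (by omega)
    | succ n ih =>
      intro v hv
      by_cases hr : Root v
      · obtain ⟨i, hxi, hBi⟩ := hr
        subst hxi
        exact ⟨i, Walk.nil, by rw [Walk.length_nil]; omega⟩
      · obtain ⟨hadj, hBu⟩ := hparspec v hr
        obtain ⟨i, w, hw⟩ := ih (par v) (by omega)
        have hFadj' : F.Adj v (par v) := by
          rw [hFadj]
          exact ⟨fun he => by rw [← he] at hBu; omega, Or.inl ⟨hr, rfl⟩⟩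
        exact ⟨i, Walk.cons hFadj' w, by rw [Walk.length_cons]; omega⟩
  obtain ⟨T, hFT, hTG, hTree⟩ := exists_tree_between hFG hFa hG
  have hburnT : burnNum T ≤ k := by
    refine Nat.sInf_le ⟨x, fun v => ?_⟩
    obtain ⟨i, w, hw⟩ := chain (B v) v le_rfl
    have h1 : T.dist v (x i) ≤ w.length := by
      have h := dist_le (w.mapLe hFT)
      simpa [Walk.mapLe] using h
    have h2 := hBle v
    exact ⟨i, by omega⟩
  have hmem : burnNum T ∈ {m : ℕ | ∃ H : SimpleGraph V, H ≤ G ∧ H.IsTree ∧ burnNum H = m} :=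
    ⟨T, hTG, hTree, rfl⟩
  apply le_antisymm
  · refine le_csInf ⟨burnNum T, hmem⟩ ?_
    rintro m ⟨H, hHG, hHtree, rfl⟩
    exact hmono H hHG hHtree.isConnected
  · exact le_trans (Nat.sInf_le hmem) hburnT
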